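/- arXiv:1405.0713 — 2 statements merged into one kernel-verified Lean document; each statement's English description precedes it below -/
import Mathlib

section
/- Let G be a κ-deletion-minimal graph. If a vertex v is adjacent to a vertex v₀ of degree 2 with N_G(v₀) = {w, v}, then v is adjacent to at least κ − deg_G(w) + 1 vertices of degree at least κ − deg_G(v) + 2. -/
open SimpleGraph

universe u₁ u₂

/-- The degree of a vertex `x` in a graph `G` (number of neighbors). -/
noncomputable def vdeg {V : Type u₁} (G : SimpleGraph V) (x : V) : ℕ :=
  (G.neighborSet x).ncard

/-- The maximum degree `Δ(G)` of a graph `G`. -/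
noncomputable def maxDeg {V : Type u₁} (G : SimpleGraph V) : ℕ :=
  sSup (Set.range (vdeg G))

/-- A proper edge coloring: distinct edges of `G` sharing an endpoint get distinct colors. -/
def IsProperEdgeColoring {V : Type u₁} (G : SimpleGraph V) (φ : Sym2 V → ℕ) : Prop :=
  ∀ e₁ ∈ G.edgeSet, ∀ e₂ ∈ G.edgeSet, e₁ ≠ e₂ → (∃ x : V, x ∈ e₁ ∧ x ∈ e₂) → φ e₁ ≠ φ e₂

/-- An acyclic edge coloring: a proper edge coloring in which every cycle receives
at least three colors. -/
def IsAcyclicEdgeColoring {V : Type u₁} (G : SimpleGraph V) (φ : Sym2 V → ℕ) : Prop :=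
  IsProperEdgeColoring G φ ∧
    ∀ (x : V) (c : G.Walk x x), c.IsCycle → 3 ≤ (c.edges.map φ).toFinset.card

/-- The acyclic chromatic index `χ'ₐ(G)`: the least number of colors in an acyclic
edge coloring of `G`. -/
noncomputable def acyclicChromaticIndex {V : Type u₁} (G : SimpleGraph V) : ℕ :=
  sInf {n : ℕ | ∃ φ : Sym2 V → ℕ, IsAcyclicEdgeColoring G φ ∧ ∀ e ∈ G.edgeSet, φ e < n}

/-- A graph `G` with maximum degree at most `κ` is `κ`-deletion-minimal if
`χ'ₐ(G) > κ` while `χ'ₐ(H) ≤ κ` for every proper subgraph `H` of `G`. -/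
def DeletionMinimal {V : Type u₁} (G : SimpleGraph V) (κ : ℕ) : Prop :=
  maxDeg G ≤ κ ∧ κ < acyclicChromaticIndex G ∧
    ∀ H : SimpleGraph V, H < G → acyclicChromaticIndex H ≤ κ

/-- `H` is a minor of `G`: there are nonempty, pairwise disjoint, connected branch sets
in `G`, one for each vertex of `H`, with an edge of `G` between the branch sets of any
two adjacent vertices of `H`. -/
def IsMinor {W : Type u₂} {V : Type u₁} (H : SimpleGraph W) (G : SimpleGraph V) : Prop :=
  ∃ B : W → Set V,
    (∀ w, (B w).Nonempty) ∧
    (∀ w, (G.induce (B w)).Connected) ∧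
    (∀ w₁ w₂, w₁ ≠ w₂ → Disjoint (B w₁) (B w₂)) ∧
    ∀ w₁ w₂, H.Adj w₁ w₂ → ∃ v₁ ∈ B w₁, ∃ v₂ ∈ B w₂, G.Adj v₁ v₂

/-- A proper minor of `G`: a minor which is not isomorphic to `G`. -/
def IsProperMinor {W : Type u₂} {V : Type u₁} (H : SimpleGraph W) (G : SimpleGraph V) : Prop :=
  IsMinor H G ∧ ¬ Nonempty (H ≃g G)

/-- A graph `G` with maximum degree at most `κ` is `κ`-minimal if `χ'ₐ(G) > κ` while
`χ'ₐ(H) ≤ κ` for every proper minor `H` of `G` with `Δ(H) ≤ Δ(G)`. -/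
def KMinimal {V : Type u₁} (G : SimpleGraph V) (κ : ℕ) : Prop :=
  maxDeg G ≤ κ ∧ κ < acyclicChromaticIndex G ∧
    ∀ (W : Type u₁) (H : SimpleGraph W),
      IsProperMinor H G → maxDeg H ≤ maxDeg G → acyclicChromaticIndex H ≤ κ

/-- Planarity, characterized combinatorially (Wagner's theorem): a graph is planar iff
it has neither a `K₅` minor nor a `K₃,₃` minor. -/
def IsPlanar {V : Type u₁} (G : SimpleGraph V) : Prop :=
  ¬ IsMinor (completeGraph (Fin 5)) G ∧
    ¬ IsMinor (completeBipartiteGraph (Fin 3) (Fin 3)) G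

/-- `G` is 2-connected: it is connected, has at least three vertices, and removing
any single vertex leaves it connected. -/
def TwoConnected {V : Type u₁} (G : SimpleGraph V) : Prop :=
  G.Connected ∧ 3 ≤ Nat.card V ∧ ∀ x : V, (G.induce {y : V | y ≠ x}).Connected

/-- A path of `H` whose edges are all colored `α` or `β` and alternate. -/
def IsAltPath {V : Type u₁} (H : SimpleGraph V) (φ : Sym2 V → ℕ) (α β : ℕ)
    {x y : V} (p : H.Walk x y) : Prop :=
  p.IsPath ∧ (∀ e ∈ p.edges, φ e = α ∨ φ e = β) ∧
    p.edges.Chain' fun e₁ e₂ => φ e₁ ≠ φ e₂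

/-- A maximal `(α, β)`-dichromatic path: an alternating path that is not properly
contained in any other alternating path. -/
def IsMaxAltPath {V : Type u₁} (H : SimpleGraph V) (φ : Sym2 V → ℕ) (α β : ℕ)
    {x y : V} (p : H.Walk x y) : Prop :=
  IsAltPath H φ α β p ∧
    ∀ {x' y' : V} (q : H.Walk x' y'), IsAltPath H φ α β q →
      (∀ z ∈ p.support, z ∈ q.support) → (∀ e ∈ p.edges, e ∈ q.edges) →
      ∀ e ∈ q.edges, e ∈ p.edges

section Helpers

variable {V : Type u₁}

/-- Two distinct edges of a cycle at its basepoint. -/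
lemma cycle_two_edges_start {G : SimpleGraph V} {x : V} (p : G.Walk x x) (hp : p.IsCycle) :
    ∃ e₁ e₂, e₁ ∈ p.edges ∧ e₂ ∈ p.edges ∧ e₁ ≠ e₂ ∧ x ∈ e₁ ∧ x ∈ e₂ := by
  cases p with
  | nil => exact absurd rfl hp.ne_nil
  | @cons _ y _ h q =>
    have hq : q.reverse.length ≠ 0 := by
      have := hp.three_le_length
      simp only [Walk.length_cons] at this
      simp only [Walk.length_reverse]; omega
    cases qr : q.reverse with
    | nil => rw [qr] at hq; simp at hq
    | @cons _ z _ h' r =>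
      have hz : s(x, z) ∈ q.edges := by
        have : s(x, z) ∈ q.reverse.edges := by rw [qr]; simp [Walk.edges_cons]
        rw [Walk.edges_reverse, List.mem_reverse] at this
        exact this
      refine ⟨s(x, y), s(x, z), by simp [Walk.edges_cons], ?_, ?_, by simp, by simp⟩
      · simp only [Walk.edges_cons, List.mem_cons]
        exact Or.inr hz
      · have hnd := hp.edges_nodup
        simp only [Walk.edges_cons, List.nodup_cons] at hnd
        intro hcon
        exact hnd.1 (hcon ▸ hz)

/-- Two distinct edges of a cycle at any vertex of its support. -/
lemma cycle_two_edges {G : SimpleGraph V} {x y : V} (p : G.Walk x x) (hp : p.IsCycle)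
    (hy : y ∈ p.support) :
    ∃ e₁ e₂, e₁ ∈ p.edges ∧ e₂ ∈ p.edges ∧ e₁ ≠ e₂ ∧ y ∈ e₁ ∧ y ∈ e₂ := by
  classical
  obtain ⟨e₁, e₂, h1, h2, h3, h4, h5⟩ := cycle_two_edges_start (p.rotate y hy) (hp.rotate hy)
  have hrot := p.rotate_edges y hy
  exact ⟨e₁, e₂, hrot.mem_iff.mp h1, hrot.mem_iff.mp h2, h3, h4, h5⟩

/-- A vertex of an edge of a walk lies on the support. -/
lemma mem_support_of_mem_edges' {G : SimpleGraph V} {x u : V} {p : G.Walk x x} {e : Sym2 V}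
    (he : e ∈ p.edges) (hu : u ∈ e) : u ∈ p.support := by
  induction e with
  | h a b =>
    rcases Sym2.mem_iff.mp hu with rfl | rfl
    · exact p.fst_mem_support_of_mem_edges he
    · exact p.snd_mem_support_of_mem_edges he

/-- A cycle whose edges avoid the modified edges keeps at least three colors. -/
lemma cycle_transfer {G H : SimpleGraph V} {φ ψ : Sym2 V → ℕ} {x : V}
    (p : G.Walk x x) (hp : p.IsCycle)
    (hH : ∀ e ∈ p.edges, e ∈ H.edgeSet)
    (hagree : ∀ e ∈ p.edges, ψ e = φ e)
    (hφ : IsAcyclicEdgeColoring H φ) :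
    3 ≤ (p.edges.map ψ).toFinset.card := by
  have hH' : ∀ e ∈ p.edges, e ∈ H.edgeSet := hH
  have key := hφ.2 x (p.transfer H hH') (hp.transfer hH')
  rw [Walk.edges_transfer] at key
  have : p.edges.map ψ = p.edges.map φ := List.map_congr_left hagree
  rw [this]
  exact key

/-- There is some acyclic edge coloring of any graph on a finite vertex type. -/
lemma exists_aec [Fintype V] (H : SimpleGraph V) :
    ∃ n, ∃ φ : Sym2 V → ℕ, IsAcyclicEdgeColoring H φ ∧ ∀ e ∈ H.edgeSet, φ e < n := by
  classical
  refine ⟨Fintype.card (Sym2 V), fun e => (Fintype.equivFin (Sym2 V)) e, ⟨?_, ?_⟩, ?_⟩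
  · intro e₁ _ e₂ _ hne _
    simp only [ne_eq, Nat.cast_inj, Fin.val_eq_val, EmbeddingLike.apply_eq_iff_eq]
    exact hne
  · intro y c hc
    have hinj : Function.Injective (fun e : Sym2 V => ((Fintype.equivFin (Sym2 V)) e : ℕ)) := by
      intro a b hab
      simpa [Fin.val_eq_val] using hab
    have hnd : (c.edges.map fun e => ((Fintype.equivFin (Sym2 V)) e : ℕ)).Nodup :=
      hc.edges_nodup.map hinj
    rw [List.toFinset_card_of_nodup hnd, List.length_map, Walk.length_edges]
    exact hc.three_le_length
  · intro e _
    exact (Fintype.equivFin (Sym2 V) e).isLt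

/-- From deletion-minimality, a proper subgraph has an acyclic coloring with colors `< κ`. -/
lemma coloring_of_lt [Fintype V] {G : SimpleGraph V} {κ : ℕ} (h : DeletionMinimal G κ)
    {H : SimpleGraph V} (hlt : H < G) :
    ∃ φ : Sym2 V → ℕ, IsAcyclicEdgeColoring H φ ∧ ∀ e ∈ H.edgeSet, φ e < κ := by
  have hle : acyclicChromaticIndex H ≤ κ := h.2.2 H hlt
  obtain ⟨n, φ, hφ, hb⟩ := exists_aec H
  have hne : {n : ℕ | ∃ φ : Sym2 V → ℕ, IsAcyclicEdgeColoring H φ ∧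
      ∀ e ∈ H.edgeSet, φ e < n}.Nonempty := ⟨n, φ, hφ, hb⟩
  obtain ⟨φ', hφ', hb'⟩ := Nat.sInf_mem hne
  exact ⟨φ', hφ', fun e he => lt_of_lt_of_le (hb' e he) hle⟩

/-- Any proper coloring of `G` with colors `< κ` has a nearly bichromatic cycle. -/
lemma exists_bad_cycle [Fintype V] {G : SimpleGraph V} {κ : ℕ} (h : DeletionMinimal G κ)
    (ψ : Sym2 V → ℕ) (hprop : IsProperEdgeColoring G ψ) (hb : ∀ e ∈ G.edgeSet, ψ e < κ) :
    ∃ (x : V) (p : G.Walk x x), p.IsCycle ∧ (p.edges.map ψ).toFinset.card < 3 := by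
  by_contra hcon
  push_neg at hcon
  have : κ ∈ {n : ℕ | ∃ φ : Sym2 V → ℕ, IsAcyclicEdgeColoring G φ ∧
      ∀ e ∈ G.edgeSet, φ e < n} := ⟨ψ, ⟨hprop, fun x c hc => hcon x c hc⟩, hb⟩
  exact absurd (Nat.sInf_le this) (not_le.mpr h.2.1)

end Helpers

section Palette

variable {V : Type u₁}

/-- The set of colors appearing on edges of `H` at `x`. -/
def pal (H : SimpleGraph V) (φ : Sym2 V → ℕ) (x : V) : Set ℕ := φ '' (H.incidenceSet x)

lemma mem_pal {H : SimpleGraph V} {φ : Sym2 V → ℕ} {x : V} {n : ℕ} :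
    n ∈ pal H φ x ↔ ∃ e, e ∈ H.edgeSet ∧ x ∈ e ∧ φ e = n := by
  simp only [pal, Set.mem_image, incidenceSet, Set.mem_sep_iff, mem_edgeSet]
  constructor
  · rintro ⟨e, ⟨he, hx⟩, rfl⟩; exact ⟨e, he, hx, rfl⟩
  · rintro ⟨e, he, hx, rfl⟩; exact ⟨e, ⟨he, hx⟩, rfl⟩

lemma pal_card [Fintype V] {H : SimpleGraph V} {φ : Sym2 V → ℕ}
    (hφ : IsProperEdgeColoring H φ) (x : V) : (pal H φ x).ncard = vdeg H x := by
  classical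
  have hinj : Set.InjOn φ (H.incidenceSet x) := by
    intro e₁ he₁ e₂ he₂ heq
    by_contra hne
    exact hφ e₁ he₁.1 e₂ he₂.1 hne ⟨x, he₁.2, he₂.2⟩ heq
  rw [pal, Set.ncard_image_of_injOn hinj, vdeg]
  rw [← Nat.card_coe_set_eq, ← Nat.card_coe_set_eq]
  exact Nat.card_congr (H.incidenceSetEquivNeighborSet x)

lemma pal_finite {V : Type u₁} [Fintype V] (H : SimpleGraph V) (φ : Sym2 V → ℕ) (x : V) :
    (pal H φ x).Finite := by
  classical
  exact ((Set.toFinite _).image φ)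

lemma pal_subset_Iio {H : SimpleGraph V} {φ : Sym2 V → ℕ} {κ : ℕ}
    (hb : ∀ e ∈ H.edgeSet, φ e < κ) (x : V) : pal H φ x ⊆ Set.Iio κ := by
  rintro n hn
  obtain ⟨e, he, _, rfl⟩ := mem_pal.mp hn
  exact hb e he

lemma Iio_ncard (κ : ℕ) : (Set.Iio κ).ncard = κ := by
  rw [show Set.Iio κ = ↑(Finset.Iio κ) by ext n; simp, Set.ncard_coe_finset]
  simp

/-- Pick a color outside a small finite set. -/
lemma exists_color {κ : ℕ} {S : Set ℕ} (hS : S.Finite) (hcard : S.ncard < κ) :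
    ∃ c, c < κ ∧ c ∉ S := by
  by_contra hcon
  push_neg at hcon
  have hsub : Set.Iio κ ⊆ S := fun n hn => hcon n hn
  have := Set.ncard_le_ncard hsub hS
  rw [Iio_ncard] at this
  omega

lemma vdeg_le_maxDeg [Fintype V] (G : SimpleGraph V) (x : V) : vdeg G x ≤ maxDeg G := by
  apply le_csSup
  · exact (Set.finite_range (vdeg G)).bddAbove
  · exact ⟨x, rfl⟩

lemma vdeg_mono [Fintype V] {G H : SimpleGraph V} (hle : H ≤ G) (x : V) :
    vdeg H x ≤ vdeg G x :=
  Set.ncard_le_ncard (fun _ hy => hle hy) (Set.toFinite _)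

lemma vdeg_pos_of_adj [Fintype V] {G : SimpleGraph V} {x y : V} (h : G.Adj x y) :
    1 ≤ vdeg G x := by
  rw [vdeg]
  exact (Set.ncard_pos (Set.toFinite _)).mpr ⟨y, h⟩

end Palette

section Core

variable {V : Type u₁} [Fintype V] {G : SimpleGraph V} {κ : ℕ} {v v₀ w : V}

lemma core_lemma (h : DeletionMinimal G κ)
    (hadj : G.Adj v v₀) (hdeg : vdeg G v₀ = 2) (hN : G.neighborSet v₀ = {w, v})
    {φ : Sym2 V → ℕ} (hφ : IsAcyclicEdgeColoring (G.deleteEdges {s(v, v₀)}) φ)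
    (hφκ : ∀ e ∈ (G.deleteEdges {s(v, v₀)}).edgeSet, φ e < κ)
    {γ α : ℕ} (hγκ : γ < κ) (hακ : α < κ)
    (hγv : γ ∉ pal (G.deleteEdges {s(v, v₀)}) φ v)
    (hγα : γ ≠ α)
    (hαw : α ∉ pal (G.deleteEdges {s(v, v₀)}) φ w ∨ α = φ s(w, v₀)) :
    ∃ u, s(v, u) ∈ (G.deleteEdges {s(v, v₀)}).edgeSet ∧ φ s(v, u) = α ∧
      (u ≠ w → ∃ e', e' ∈ (G.deleteEdges {s(v, v₀)}).edgeSet ∧ u ∈ e' ∧ e' ≠ s(v, u) ∧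
        φ e' = γ) := by
  classical
  set H := G.deleteEdges {s(v, v₀)} with hHdef
  set k₁ : Sym2 V := s(v, v₀) with hk₁def
  set k₂ : Sym2 V := s(w, v₀) with hk₂def
  -- basic facts
  have hwv : w ≠ v := by
    intro hcon
    rw [vdeg, hN, hcon, Set.pair_eq_singleton, Set.ncard_singleton] at hdeg
    omega
  have hv₀v : v₀ ≠ v := hadj.ne'
  have hadj_v₀w : G.Adj v₀ w := by
    have : w ∈ G.neighborSet v₀ := by rw [hN]; exact Set.mem_insert _ _
    exact this
  have hwv₀ : w ≠ v₀ := hadj_v₀w.ne'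
  have hk₁₂ : k₁ ≠ k₂ := by
    intro hc
    rw [hk₁def, hk₂def, Sym2.eq_iff] at hc
    rcases hc with ⟨hc1, _⟩ | ⟨hc1, _⟩
    · exact hwv hc1.symm
    · exact hv₀v hc1.symm
  have hHedge : H.edgeSet = G.edgeSet \ {k₁} := by
    rw [hHdef, edgeSet_deleteEdges]
  have hHsub : H.edgeSet ⊆ G.edgeSet := by rw [hHedge]; exact Set.diff_subset
  have hmemH : ∀ e, e ∈ G.edgeSet → e ≠ k₁ → e ∈ H.edgeSet := by
    intro e he hne; rw [hHedge]; exact ⟨he, hne⟩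
  have hk₂H : k₂ ∈ H.edgeSet := hmemH k₂ (by rw [hk₂def, mem_edgeSet]; exact hadj_v₀w.symm)
    (Ne.symm hk₁₂)
  have classify : ∀ e ∈ G.edgeSet, v₀ ∈ e → e = k₂ ∨ e = k₁ := by
    intro e he hv₀e
    induction e with
    | h a b =>
      have hGab : G.Adj a b := (mem_edgeSet G).mp he
      rcases Sym2.mem_iff.mp hv₀e with rfl | rfl
      · have hb : b ∈ G.neighborSet v₀ := hGab
        rw [hN] at hb
        rcases hb with rfl | rfl
        · left; rw [hk₂def]; exact Sym2.eq_swap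
        · right; rw [hk₁def]; exact Sym2.eq_swap
      · have ha : a ∈ G.neighborSet v₀ := hGab.symm
        rw [hN] at ha
        rcases ha with rfl | rfl
        · left; rfl
        · right; rfl
  have hvk₂ : v ∉ k₂ := by
    rw [hk₂def, Sym2.mem_iff]
    push_neg
    exact ⟨Ne.symm hwv, Ne.symm hv₀v⟩
  -- the modified coloring
  set ψ : Sym2 V → ℕ := Function.update (Function.update φ k₂ α) k₁ γ with hψdef
  have hψ₁ : ψ k₁ = γ := Function.update_self _ _ _
  have hψ₂ : ψ k₂ = α := by
    rw [hψdef, Function.update_of_ne (Ne.symm hk₁₂), Function.update_self]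
  have hψe : ∀ e, e ≠ k₁ → e ≠ k₂ → ψ e = φ e := by
    intro e h1 h2
    rw [hψdef, Function.update_of_ne h1, Function.update_of_ne h2]
  have pal_ne : ∀ e ∈ H.edgeSet, v ∈ e → φ e ≠ γ := by
    intro e he hve hcon
    exact hγv (mem_pal.mpr ⟨e, he, hve, hcon⟩)
  have palw_ne : ∀ e ∈ H.edgeSet, w ∈ e → e ≠ k₂ → φ e ≠ α := by
    intro e he hwe hne hcon
    rcases hαw with hα | hα
    · exact hα (mem_pal.mpr ⟨e, he, hwe, hcon⟩)
    · exact hφ.1 e he k₂ hk₂H hne ⟨w, hwe, by rw [hk₂def]; simp⟩ (by rw [hcon, hα, hk₂def])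
  -- properness of ψ
  have aux1 : ∀ f ∈ G.edgeSet, f ≠ k₁ → (∃ x, x ∈ k₁ ∧ x ∈ f) → ψ k₁ ≠ ψ f := by
    rintro f hf hfne ⟨x, hx1, hx2⟩
    rcases Sym2.mem_iff.mp (hk₁def ▸ hx1) with rfl | rfl
    · -- shared vertex is v
      have hfk₂ : f ≠ k₂ := fun hc => hvk₂ (hc ▸ hx2)
      rw [hψ₁, hψe f hfne hfk₂]
      exact fun hc => pal_ne f (hmemH f hf hfne) hx2 hc.symm
    · -- shared vertex is v₀
      rcases classify f hf hx2 with rfl | rfl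
      · rw [hψ₁, hψ₂]; exact hγα
      · exact absurd rfl hfne
  have aux2 : ∀ f ∈ G.edgeSet, f ≠ k₁ → f ≠ k₂ → (∃ x, x ∈ k₂ ∧ x ∈ f) → ψ k₂ ≠ ψ f := by
    rintro f hf h1 h2 ⟨x, hx1, hx2⟩
    rcases Sym2.mem_iff.mp (hk₂def ▸ hx1) with rfl | rfl
    · -- shared vertex is w
      rw [hψ₂, hψe f h1 h2]
      exact fun hc => palw_ne f (hmemH f hf h1) hx2 h2 hc.symm
    · -- shared vertex is v₀
      rcases classify f hf hx2 with rfl | rfl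
      · exact absurd rfl h2
      · exact absurd rfl h1
  have hprop : IsProperEdgeColoring G ψ := by
    intro e₁ he₁ e₂ he₂ hne hshare
    rcases eq_or_ne e₁ k₁ with rfl | h1
    · exact aux1 e₂ he₂ (Ne.symm hne) hshare
    · rcases eq_or_ne e₂ k₁ with rfl | h2
      · obtain ⟨x, hx1, hx2⟩ := hshare
        exact (aux1 e₁ he₁ hne ⟨x, hx2, hx1⟩).symm
      · rcases eq_or_ne e₁ k₂ with rfl | h3
        · exact aux2 e₂ he₂ h2 (Ne.symm hne) hshare
        · rcases eq_or_ne e₂ k₂ with rfl | h4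
          · obtain ⟨x, hx1, hx2⟩ := hshare
            exact (aux2 e₁ he₁ h1 h3 ⟨x, hx2, hx1⟩).symm
          · rw [hψe e₁ h1 h3, hψe e₂ h2 h4]
            exact hφ.1 e₁ (hmemH e₁ he₁ h1) e₂ (hmemH e₂ he₂ h2) hne hshare
  have hψκ : ∀ e ∈ G.edgeSet, ψ e < κ := by
    intro e he
    rcases eq_or_ne e k₁ with rfl | h1
    · rw [hψ₁]; exact hγκ
    · rcases eq_or_ne e k₂ with rfl | h2
      · rw [hψ₂]; exact hακ
      · rw [hψe e h1 h2]; exact hφκ e (hmemH e he h1)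
  -- a bad cycle must exist
  obtain ⟨x, p, hp, hcard⟩ := exists_bad_cycle h ψ hprop hψκ
  have hpsub : ∀ e ∈ p.edges, e ∈ G.edgeSet := fun e he => p.edges_subset_edgeSet he
  -- the bad cycle must contain k₁
  have hk₁p : k₁ ∈ p.edges := by
    by_contra hk₁p
    have hk₂p : k₂ ∉ p.edges := by
      intro hk₂p
      have hv₀supp : v₀ ∈ p.support :=
        mem_support_of_mem_edges' hk₂p (by rw [hk₂def, Sym2.mem_iff]; right; rfl)
      obtain ⟨e₁, e₂, m1, m2, hne, i1, i2⟩ := cycle_two_edges p hp hv₀supp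
      rcases classify e₁ (hpsub e₁ m1) i1 with rfl | rfl
      · rcases classify e₂ (hpsub e₂ m2) i2 with rfl | rfl
        · exact hne rfl
        · exact hk₁p m2
      · exact hk₁p m1
    have hedges : ∀ e ∈ p.edges, e ∈ H.edgeSet :=
      fun e he => hmemH e (hpsub e he) (fun hc => hk₁p (hc ▸ he))
    have hagree : ∀ e ∈ p.edges, ψ e = φ e :=
      fun e he => hψe e (fun hc => hk₁p (hc ▸ he)) (fun hc => hk₂p (hc ▸ he))
    exact absurd (cycle_transfer p hp hedges hagree hφ) (by omega)
  have hv₀supp : v₀ ∈ p.support :=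
    mem_support_of_mem_edges' hk₁p (by rw [hk₁def, Sym2.mem_iff]; right; rfl)
  have hk₂p : k₂ ∈ p.edges := by
    obtain ⟨e₁, e₂, m1, m2, hne, i1, i2⟩ := cycle_two_edges p hp hv₀supp
    rcases classify e₁ (hpsub e₁ m1) i1 with rfl | rfl
    · exact m1
    · rcases classify e₂ (hpsub e₂ m2) i2 with rfl | rfl
      · exact m2
      · exact absurd rfl hne
  -- all colors of the cycle are γ or α
  have hγT : γ ∈ (p.edges.map ψ).toFinset := by
    rw [List.mem_toFinset]
    exact List.mem_map.mpr ⟨k₁, hk₁p, hψ₁⟩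
  have hαT : α ∈ (p.edges.map ψ).toFinset := by
    rw [List.mem_toFinset]
    exact List.mem_map.mpr ⟨k₂, hk₂p, hψ₂⟩
  have hTsub : (p.edges.map ψ).toFinset = {γ, α} := by
    refine (Finset.eq_of_subset_of_card_le ?_ ?_).symm
    · intro c hc
      rcases Finset.mem_insert.mp hc with rfl | hc
      · exact hγT
      · rw [Finset.mem_singleton] at hc; exact hc ▸ hαT
    · rw [Finset.card_insert_of_notMem (by simp [hγα]), Finset.card_singleton]
      omega
  have hcol : ∀ e ∈ p.edges, ψ e = γ ∨ ψ e = α := by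
    intro e he
    have : ψ e ∈ (p.edges.map ψ).toFinset := by
      rw [List.mem_toFinset]
      exact List.mem_map.mpr ⟨e, he, rfl⟩
    rw [hTsub] at this
    simpa using this
  -- find the other edge at v
  have hvsupp : v ∈ p.support :=
    mem_support_of_mem_edges' hk₁p (by rw [hk₁def, Sym2.mem_iff]; left; rfl)
  obtain ⟨e₁, e₂, m1, m2, hne, i1, i2⟩ := cycle_two_edges p hp hvsupp
  obtain ⟨e, hep, hve, henek₁⟩ : ∃ e, e ∈ p.edges ∧ v ∈ e ∧ e ≠ k₁ := by
    rcases eq_or_ne e₁ k₁ with rfl | h1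
    · exact ⟨e₂, m2, i2, fun hc => hne (hc ▸ rfl)⟩
    · exact ⟨e₁, m1, i1, h1⟩
  have henek₂ : e ≠ k₂ := fun hc => hvk₂ (hc ▸ hve)
  have heH : e ∈ H.edgeSet := hmemH e (hpsub e hep) henek₁
  have hφeα : φ e = α := by
    have := hcol e hep
    rw [hψe e henek₁ henek₂] at this
    rcases this with hc | hc
    · exact absurd hc (pal_ne e heH hve)
    · exact hc
  obtain ⟨u, rfl⟩ := Sym2.mem_iff_exists.mp hve
  refine ⟨u, heH, hφeα, ?_⟩
  intro huw
  have huv : u ≠ v := ((mem_edgeSet G).mp (hHsub heH)).ne'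
  have huv₀ : u ≠ v₀ := by
    intro hc
    exact henek₁ (by rw [hc, hk₁def])
  have husupp : u ∈ p.support :=
    mem_support_of_mem_edges' hep (by rw [Sym2.mem_iff]; right; rfl)
  obtain ⟨f₁, f₂, n1, n2, fne, j1, j2⟩ := cycle_two_edges p hp husupp
  obtain ⟨e', he'p, hue', he'ne⟩ : ∃ e', e' ∈ p.edges ∧ u ∈ e' ∧ e' ≠ s(v, u) := by
    rcases eq_or_ne f₁ s(v, u) with rfl | h1
    · exact ⟨f₂, n2, j2, fun hc => fne (hc ▸ rfl)⟩
    · exact ⟨f₁, n1, j1, h1⟩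
  have he'k₁ : e' ≠ k₁ := by
    intro hc
    rw [hc, hk₁def, Sym2.mem_iff] at hue'
    rcases hue' with hc' | hc'
    · exact huv hc'
    · exact huv₀ hc'
  have he'k₂ : e' ≠ k₂ := by
    intro hc
    rw [hc, hk₂def, Sym2.mem_iff] at hue'
    rcases hue' with hc' | hc'
    · exact huw hc'
    · exact huv₀ hc'
  have he'H : e' ∈ H.edgeSet := hmemH e' (hpsub e' he'p) he'k₁
  have hφe' : φ e' = γ := by
    have := hcol e' he'p
    rw [hψe e' he'k₁ he'k₂] at this
    rcases this with hc | hc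
    · exact hc
    · exfalso
      exact hφ.1 e' he'H s(v, u) heH he'ne ⟨u, hue', by rw [Sym2.mem_iff]; right; rfl⟩
        (by rw [hc, hφeα])
  exact ⟨e', he'H, hue', he'ne, hφe'⟩

end Core

section MinDegree

variable {V : Type u₁} [Fintype V] {G : SimpleGraph V} {κ : ℕ}

lemma deleteEdges_lt' {x y : V} (hxy : G.Adj x y) : G.deleteEdges {s(x, y)} < G := by
  refine lt_of_le_of_ne (deleteEdges_le _) (fun hc => ?_)
  have : (G.deleteEdges {s(x, y)}).Adj x y := by rw [hc]; exact hxy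
  rw [deleteEdges_adj] at this
  exact this.2 (by simp)

lemma vdeg_deleteEdges_self {x y : V} (hxy : G.Adj x y) :
    vdeg (G.deleteEdges {s(x, y)}) x = vdeg G x - 1 := by
  have hns : (G.deleteEdges {s(x, y)}).neighborSet x = G.neighborSet x \ {y} := by
    ext z
    simp only [mem_neighborSet, deleteEdges_adj, Set.mem_diff, Set.mem_singleton_iff,
      Set.mem_singleton_iff, Sym2.eq_iff]
    constructor
    · rintro ⟨hz, hz2⟩
      refine ⟨hz, fun hc => hz2 ?_⟩
      tauto
    · rintro ⟨hz, hz2⟩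
      refine ⟨hz, fun hc => ?_⟩
      rcases hc with ⟨-, rfl⟩ | ⟨rfl, rfl⟩
      · exact hz2 rfl
      · exact G.irrefl hz
  rw [vdeg, vdeg, hns]
  exact Set.ncard_diff_singleton_of_mem hxy

lemma vdeg_deleteEdges_other {x y z : V} (hzx : z ≠ x) (hzy : z ≠ y) :
    vdeg (G.deleteEdges {s(x, y)}) z = vdeg G z := by
  have hns : (G.deleteEdges {s(x, y)}).neighborSet z = G.neighborSet z := by
    ext u
    simp only [mem_neighborSet, deleteEdges_adj, Set.mem_singleton_iff, Sym2.eq_iff]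
    constructor
    · exact fun hu => hu.1
    · intro hu
      refine ⟨hu, fun hc => ?_⟩
      rcases hc with ⟨rfl, _⟩ | ⟨rfl, _⟩
      · exact hzx rfl
      · exact hzy rfl
  rw [vdeg, vdeg, hns]

/-- In a `κ`-deletion-minimal graph, every vertex with a neighbor has degree at least 2. -/
lemma vdeg_ge_two (h : DeletionMinimal G κ) {x y : V} (hxy : G.Adj x y) :
    2 ≤ vdeg G y := by
  classical
  by_contra hcon
  push_neg at hcon
  have h1 : vdeg G y = 1 := by
    have := vdeg_pos_of_adj hxy.symm
    omega
  have hNy : G.neighborSet y = {x} := by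
    obtain ⟨a, ha⟩ := (Set.ncard_eq_one).mp h1
    have hx : x ∈ G.neighborSet y := hxy.symm
    rw [ha] at hx ⊢
    rw [Set.mem_singleton_iff.mp hx]
  set k : Sym2 V := s(x, y) with hkdef
  set H := G.deleteEdges {k} with hHdef
  obtain ⟨φ, hφ, hφκ⟩ := coloring_of_lt h (deleteEdges_lt' hxy)
  have hHedge : H.edgeSet = G.edgeSet \ {k} := by rw [hHdef, edgeSet_deleteEdges]
  have hHsub : H.edgeSet ⊆ G.edgeSet := by rw [hHedge]; exact Set.diff_subset
  have hmemH : ∀ e, e ∈ G.edgeSet → e ≠ k → e ∈ H.edgeSet := by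
    intro e he hne; rw [hHedge]; exact ⟨he, hne⟩
  have classify_y : ∀ e ∈ G.edgeSet, y ∈ e → e = k := by
    intro e he hye
    induction e with
    | h a b =>
      have hGab : G.Adj a b := (mem_edgeSet G).mp he
      rcases Sym2.mem_iff.mp hye with rfl | rfl
      · have hb : b ∈ G.neighborSet y := hGab
        rw [hNy, Set.mem_singleton_iff] at hb
        subst hb
        rw [hkdef]; exact Sym2.eq_swap
      · have ha : a ∈ G.neighborSet y := hGab.symm
        rw [hNy, Set.mem_singleton_iff] at ha
        subst ha
        rfl
  -- pick a color free at x
  have hxκ : vdeg G x ≤ κ := le_trans (vdeg_le_maxDeg G x) h.1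
  have hx1 : 1 ≤ vdeg G x := vdeg_pos_of_adj hxy
  have hcardx : (pal H φ x).ncard < κ := by
    rw [pal_card hφ.1]
    have : vdeg (G.deleteEdges {s(x, y)}) x = vdeg G x - 1 := vdeg_deleteEdges_self hxy
    omega
  obtain ⟨c, hcκ, hcpal⟩ := exists_color (pal_finite H φ x) hcardx
  set ψ : Sym2 V → ℕ := Function.update φ k c with hψdef
  have hψk : ψ k = c := Function.update_self _ _ _
  have hψe : ∀ e, e ≠ k → ψ e = φ e := fun e hne => Function.update_of_ne hne _ _
  have aux : ∀ f ∈ G.edgeSet, f ≠ k → (∃ z, z ∈ k ∧ z ∈ f) → ψ k ≠ ψ f := by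
    rintro f hf hfne ⟨z, hz1, hz2⟩
    rcases Sym2.mem_iff.mp (hkdef ▸ hz1) with rfl | rfl
    · rw [hψk, hψe f hfne]
      intro hc
      exact hcpal (mem_pal.mpr ⟨f, hmemH f hf hfne, hz2, hc.symm⟩)
    · exact absurd (classify_y f hf hz2) hfne
  have hprop : IsProperEdgeColoring G ψ := by
    intro e₁ he₁ e₂ he₂ hne hshare
    rcases eq_or_ne e₁ k with rfl | h1
    · exact aux e₂ he₂ (Ne.symm hne) hshare
    · rcases eq_or_ne e₂ k with rfl | h2
      · obtain ⟨z, hz1, hz2⟩ := hshare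
        exact (aux e₁ he₁ h1 ⟨z, hz2, hz1⟩).symm
      · rw [hψe e₁ h1, hψe e₂ h2]
        exact hφ.1 e₁ (hmemH e₁ he₁ h1) e₂ (hmemH e₂ he₂ h2) hne hshare
  have hψκ : ∀ e ∈ G.edgeSet, ψ e < κ := by
    intro e he
    rcases eq_or_ne e k with rfl | h1
    · rw [hψk]; exact hcκ
    · rw [hψe e h1]; exact hφκ e (hmemH e he h1)
  obtain ⟨z, p, hp, hcard⟩ := exists_bad_cycle h ψ hprop hψκ
  have hpsub : ∀ e ∈ p.edges, e ∈ G.edgeSet := fun e he => p.edges_subset_edgeSet he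
  have hkp : k ∉ p.edges := by
    intro hkp
    have hysupp : y ∈ p.support :=
      mem_support_of_mem_edges' hkp (by rw [hkdef, Sym2.mem_iff]; right; rfl)
    obtain ⟨e₁, e₂, m1, m2, hne, i1, i2⟩ := cycle_two_edges p hp hysupp
    exact hne ((classify_y e₁ (hpsub e₁ m1) i1).trans (classify_y e₂ (hpsub e₂ m2) i2).symm)
  have hedges : ∀ e ∈ p.edges, e ∈ H.edgeSet :=
    fun e he => hmemH e (hpsub e he) (fun hc => hkp (hc ▸ he))
  have hagree : ∀ e ∈ p.edges, ψ e = φ e :=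
    fun e he => hψe e (fun hc => hkp (hc ▸ he))
  exact absurd (cycle_transfer p hp hedges hagree hφ) (by omega)

end MinDegree

/-- If `G` is `κ`-deletion-minimal and `v` is adjacent to a degree-2 vertex `v₀` with
`N_G(v₀) = {w, v}`, then `v` is adjacent to at least `κ - deg_G(w) + 1` vertices of
degree at least `κ - deg_G(v) + 2`. -/
theorem deletionMinimal_neighbors_of_degree_two {V : Type u₁} [Fintype V]
    (G : SimpleGraph V) (κ : ℕ) (h : DeletionMinimal G κ)
    (v v₀ w : V) (hadj : G.Adj v v₀) (hdeg : vdeg G v₀ = 2)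
    (hN : G.neighborSet v₀ = {w, v}) :
    (κ : ℤ) - vdeg G w + 1 ≤
      (({x : V | G.Adj v x ∧ (κ : ℤ) - vdeg G v + 2 ≤ (vdeg G x : ℤ)}).ncard : ℤ) := by
  classical
  set S := {x : V | G.Adj v x ∧ (κ : ℤ) - vdeg G v + 2 ≤ (vdeg G x : ℤ)} with hSdef
  -- basic facts
  have hwv : w ≠ v := by
    intro hcon
    rw [vdeg, hN, hcon, Set.pair_eq_singleton, Set.ncard_singleton] at hdeg
    omega
  have hv₀v : v₀ ≠ v := hadj.ne'
  have hadj_v₀w : G.Adj v₀ w := by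
    have : w ∈ G.neighborSet v₀ := by rw [hN]; exact Set.mem_insert _ _
    exact this
  have hwv₀ : w ≠ v₀ := hadj_v₀w.ne'
  have hdw1 : 1 ≤ vdeg G w := vdeg_pos_of_adj hadj_v₀w.symm
  have hdwκ : vdeg G w ≤ κ := le_trans (vdeg_le_maxDeg G w) h.1
  have hdvκ : vdeg G v ≤ κ := le_trans (vdeg_le_maxDeg G v) h.1
  have hdv1 : 1 ≤ vdeg G v := vdeg_pos_of_adj hadj
  have hSfin : S.Finite := Set.toFinite _
  rcases eq_or_lt_of_le hdvκ with hκv | hlt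
  · -- case deg v = κ : every neighbor of v has degree at least 2
    have hsub : G.neighborSet v ⊆ S := by
      intro x hx
      have hx2 : 2 ≤ vdeg G x := vdeg_ge_two h (hx : G.Adj v x)
      refine ⟨hx, ?_⟩
      rw [hκv]
      push_cast
      omega
    have hS : vdeg G v ≤ S.ncard := Set.ncard_le_ncard hsub hSfin
    have : (κ : ℤ) ≤ (S.ncard : ℤ) := by
      rw [hκv] at hS
      exact_mod_cast hS
    omega
  · -- main case : deg v < κ
    set H := G.deleteEdges {s(v, v₀)} with hHdef
    obtain ⟨φ, hφ, hφκ⟩ := coloring_of_lt h (deleteEdges_lt' hadj)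
    have hk₂ne : s(w, v₀) ≠ s(v, v₀) := by
      intro hc
      rcases Sym2.eq_iff.mp hc with ⟨hc1, -⟩ | ⟨hc1, -⟩
      · exact hwv hc1
      · exact hwv₀ hc1
    have hk₂H : s(w, v₀) ∈ H.edgeSet := by
      rw [hHdef, edgeSet_deleteEdges]
      exact ⟨(mem_edgeSet G).mpr hadj_v₀w.symm, by simpa using hk₂ne⟩
    set c₁ := φ s(w, v₀) with hc₁def
    have hc₁κ : c₁ < κ := hφκ _ hk₂H
    have hc₁w : c₁ ∈ pal H φ w :=
      mem_pal.mpr ⟨s(w, v₀), hk₂H, by rw [Sym2.mem_iff]; left; rfl, rfl⟩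
    have hpalv : (pal H φ v).ncard = vdeg G v - 1 := by
      rw [pal_card hφ.1, vdeg_deleteEdges_self hadj]
    have hpalw : (pal H φ w).ncard = vdeg G w := by
      rw [pal_card hφ.1, vdeg_deleteEdges_other hwv hwv₀]
    have hpalwIio : pal H φ w ⊆ Set.Iio κ := pal_subset_Iio hφκ w
    -- the key step : each admissible color yields a big neighbor
    have key : ∀ a, a < κ → (a ∉ pal H φ w ∨ a = c₁) →
        ∃ u, s(v, u) ∈ H.edgeSet ∧ φ s(v, u) = a ∧ u ∈ S := by
      intro a haκ haw
      have hcard : (pal H φ v ∪ {a}).ncard < κ := by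
        have h1 := Set.ncard_union_le (pal H φ v) {a}
        rw [Set.ncard_singleton, hpalv] at h1
        omega
      obtain ⟨γ, hγκ, hγ⟩ := exists_color ((pal_finite H φ v).union (Set.finite_singleton a))
        hcard
      have hγv : γ ∉ pal H φ v := fun hc => hγ (Or.inl hc)
      have hγa : γ ≠ a := fun hc => hγ (Or.inr (hc ▸ rfl))
      obtain ⟨u, hu1, hu2, hu3⟩ :=
        core_lemma h hadj hdeg hN hφ hφκ hγκ haκ hγv hγa haw
      have hGvu : G.Adj v u := (mem_edgeSet G).mp ((deleteEdges_le _) hu1)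
      have huw : u ≠ w := by
        intro hueq
        rw [hueq] at hu1 hu2
        rcases haw with haw | haw
        · exact haw (mem_pal.mpr ⟨s(v, w), hu1, by rw [Sym2.mem_iff]; right; rfl, hu2⟩)
        · have hne : s(v, w) ≠ s(w, v₀) := by
            intro hc
            rcases Sym2.eq_iff.mp hc with ⟨hc1, -⟩ | ⟨hc1, -⟩
            · exact hwv hc1.symm
            · exact hv₀v hc1.symm
          exact hφ.1 s(v, w) hu1 s(w, v₀) hk₂H hne
            ⟨w, by rw [Sym2.mem_iff]; right; rfl, by rw [Sym2.mem_iff]; left; rfl⟩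
            (by rw [hu2, haw, hc₁def])
      have hapalv : a ∈ pal H φ v :=
        mem_pal.mpr ⟨s(v, u), hu1, by rw [Sym2.mem_iff]; left; rfl, hu2⟩
      have hapalu : a ∈ pal H φ u :=
        mem_pal.mpr ⟨s(v, u), hu1, by rw [Sym2.mem_iff]; right; rfl, hu2⟩
      -- every color missing at v appears at u
      have hbig : ∀ c, c < κ → c ∉ pal H φ v → c ∈ pal H φ u := by
        intro c hcκ hcv
        rcases eq_or_ne c a with rfl | hca
        · exact hapalu
        · obtain ⟨u', h1', h2', h3'⟩ :=
            core_lemma h hadj hdeg hN hφ hφκ hcκ haκ hcv hca haw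
          have huu : u' = u := by
            by_contra hne
            have hedne : s(v, u') ≠ s(v, u) := by
              intro hc
              rcases Sym2.eq_iff.mp hc with ⟨-, hc2⟩ | ⟨hc1, -⟩
              · exact hne hc2
              · exact G.irrefl (hc1 ▸ hGvu)
            exact hφ.1 s(v, u') h1' s(v, u) hu1 hedne
              ⟨v, by rw [Sym2.mem_iff]; left; rfl, by rw [Sym2.mem_iff]; left; rfl⟩
              (by rw [h2', hu2])
          subst huu
          obtain ⟨e', he'H, hue', -, he'c⟩ := h3' huw
          exact mem_pal.mpr ⟨e', he'H, hue', he'c⟩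
      -- u has large degree
      have hsubu : (Set.Iio κ \ pal H φ v) ∪ {a} ⊆ pal H φ u := by
        intro c hc
        rcases hc with ⟨hc1, hc2⟩ | hc
        · exact hbig c hc1 hc2
        · rw [Set.mem_singleton_iff] at hc
          exact hc ▸ hapalu
      have hcard1 : ((Set.Iio κ \ pal H φ v) ∪ {a}).ncard = κ - (vdeg G v - 1) + 1 := by
        rw [Set.ncard_union_eq (by
            rw [Set.disjoint_singleton_right]
            exact fun hc => hc.2 hapalv)
          ((Set.finite_Iio κ).diff) (Set.finite_singleton a),
          Set.ncard_diff (pal_subset_Iio hφκ v) (pal_finite H φ v), Iio_ncard, hpalv,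
          Set.ncard_singleton]
      have hucard : κ - (vdeg G v - 1) + 1 ≤ vdeg G u := by
        calc κ - (vdeg G v - 1) + 1 = ((Set.Iio κ \ pal H φ v) ∪ {a}).ncard := hcard1.symm
          _ ≤ (pal H φ u).ncard := Set.ncard_le_ncard hsubu (pal_finite H φ u)
          _ = vdeg H u := pal_card hφ.1 u
          _ ≤ vdeg G u := vdeg_mono (deleteEdges_le _) u
      refine ⟨u, hu1, hu2, hGvu, ?_⟩
      have : κ - (vdeg G v - 1) + 1 = κ - vdeg G v + 2 := by omega
      rw [this] at hucard
      have hc : ((κ - vdeg G v + 2 : ℕ) : ℤ) ≤ (vdeg G u : ℤ) := by exact_mod_cast hucard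
      push_cast at hc
      omega
    -- assemble the injection
    set A := insert c₁ (Set.Iio κ \ pal H φ w) with hAdef
    have hAfin : A.Finite := ((Set.finite_Iio κ).diff).insert c₁
    have hAmem : ∀ a ∈ A, a < κ ∧ (a ∉ pal H φ w ∨ a = c₁) := by
      intro a ha
      rcases Set.mem_insert_iff.mp ha with rfl | ⟨ha1, ha2⟩
      · exact ⟨hc₁κ, Or.inr rfl⟩
      · exact ⟨ha1, Or.inl ha2⟩
    set f : ℕ → V := fun a =>
      if hq : ∃ u, s(v, u) ∈ H.edgeSet ∧ φ s(v, u) = a ∧ u ∈ S then hq.choose else v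
      with hfdef
    have hf : ∀ a ∈ A, s(v, f a) ∈ H.edgeSet ∧ φ s(v, f a) = a ∧ f a ∈ S := by
      intro a ha
      obtain ⟨a1, a2⟩ := hAmem a ha
      have hq : ∃ u, s(v, u) ∈ H.edgeSet ∧ φ s(v, u) = a ∧ u ∈ S := key a a1 a2
      rw [hfdef]
      simp only [dif_pos hq]
      exact hq.choose_spec
    have hinj : Set.InjOn f A := by
      intro a ha b hb hab
      have h1 := (hf a ha).2.1
      have h2 := (hf b hb).2.1
      rw [← h1, ← h2, hab]
    have himg : f '' A ⊆ S := by
      rintro x ⟨a, ha, rfl⟩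
      exact (hf a ha).2.2
    have hAcard : A.ncard = κ - vdeg G w + 1 := by
      rw [hAdef, Set.ncard_insert_of_notMem (fun hc => hc.2 hc₁w) ((Set.finite_Iio κ).diff),
        Set.ncard_diff hpalwIio (pal_finite H φ w), Iio_ncard, hpalw]
    have hfinal : κ - vdeg G w + 1 ≤ S.ncard := by
      calc κ - vdeg G w + 1 = A.ncard := hAcard.symm
        _ = (f '' A).ncard := (Set.ncard_image_of_injOn hinj).symm
        _ ≤ S.ncard := Set.ncard_le_ncard himg hSfin
    have hc : ((κ - vdeg G w + 1 : ℕ) : ℤ) ≤ (S.ncard : ℤ) := by exact_mod_cast hfinal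
    push_cast at hc
    omega
end

section
/- Let G be a κ-deletion-minimal graph, uv an edge of G, and φ an acyclic edge coloring of G − uv with colors from {1,…,κ}. Let U(x) denote the set of colors on edges incident with x, and suppose |U(u) ∩ U(v)| = s. Let W(uv) be the set of neighbors u_i of u such that the color φ(uu_i) belongs to U(v) ∖ {φ of the edge uv, which is uncolored} (i.e., φ(uu_i) appears among the colors at v). Then deg_G(u) + deg_G(v) + Σ_{w ∈ W(uv)} deg_G(w) ≥ κ + 2s + 2. -/
open SimpleGraph

universe u₁ u₂

section AuxAEC

variable {V : Type u₁} {G : SimpleGraph V}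

private lemma aux_mem_support_of_mem_edges {x y a : V} (p : G.Walk x y) (e : Sym2 V)
    (he : e ∈ p.edges) (ha : a ∈ e) : a ∈ p.support := by
  induction e with
  | _ b c =>
    rcases Sym2.mem_iff.mp ha with rfl | rfl
    · exact p.fst_mem_support_of_mem_edges he
    · exact p.snd_mem_support_of_mem_edges he

private lemma aux_path_first_edge {x y : V} (p : G.Walk x y) (hp : p.IsPath) (e : Sym2 V)
    (he : e ∈ p.edges) (hx : x ∈ e) :
    ∃ (b : V) (hadj : G.Adj x b) (q : G.Walk b y), p = Walk.cons hadj q ∧ e = s(x, b) := by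
  cases p with
  | nil => simp at he
  | cons hadj q =>
    rename_i b
    rw [Walk.edges_cons, List.mem_cons] at he
    rcases he with rfl | he
    · exact ⟨b, hadj, q, rfl, rfl⟩
    · exfalso
      have hxs : x ∈ q.support := aux_mem_support_of_mem_edges q e he hx
      have := hp.support_nodup
      rw [Walk.support_cons] at this
      exact (List.nodup_cons.mp this).1 hxs

private lemma aux_isCycle_reverse {u : V} {c : G.Walk u u} (h : c.IsCycle) :
    c.reverse.IsCycle := by
  rw [Walk.isCycle_def] at h ⊢
  refine ⟨h.1.reverse, ?_, ?_⟩
  · intro hn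
    apply h.2.1
    simpa using congrArg Walk.reverse hn
  · have hne : c.support ≠ [] := c.support_ne_nil
    have hcons : c.support = u :: c.support.tail := c.support_eq_cons
    have htail : c.support.tail ≠ [] := by
      intro h0
      apply h.2.1
      cases c with
      | nil => rfl
      | cons h' q => simp [Walk.support_cons] at h0
    obtain ⟨l, hl⟩ : ∃ l, c.support.tail = l ++ [u] := by
      refine ⟨c.support.tail.dropLast, ?_⟩
      have h2 : c.support.tail.getLast htail = u := by
        rw [List.getLast_tail]
        exact c.getLast_support
      conv_lhs => rw [← List.dropLast_append_getLast htail, h2]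
    rw [Walk.support_reverse, hcons, hl]
    have h3 : (u :: (l ++ [u])).reverse = u :: (l.reverse ++ [u]) := by simp
    rw [h3, List.tail_cons]
    have hnd : (l ++ [u]).Nodup := hl ▸ h.2.2
    have p1 : (l.reverse ++ [u]).Perm (u :: l.reverse) := List.perm_append_singleton _ _
    rw [p1.nodup_iff]
    have h4 : u :: l.reverse = (l ++ [u]).reverse := by simp
    rw [h4, List.nodup_reverse]
    exact hnd

private lemma aux_two_step {x y : V} (p : G.Walk x y) (hp : 2 ≤ p.length) :
    ∃ (w z : V) (h₁ : G.Adj x w) (h₂ : G.Adj w z) (r : G.Walk z y),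
      p = Walk.cons h₁ (Walk.cons h₂ r) := by
  cases p with
  | nil => simp at hp
  | cons h₁ p₁ =>
    cases p₁ with
    | nil => simp at hp
    | cons h₂ r => exact ⟨_, _, h₁, h₂, r, rfl⟩

private lemma aux_cons_of_ne_nil {x : V} (p : G.Walk x x) (hp : p ≠ Walk.nil) :
    ∃ (b : V) (h : G.Adj x b) (q : G.Walk b x), p = Walk.cons h q := by
  cases p with
  | nil => exact absurd rfl hp
  | cons h q => exact ⟨_, h, q, rfl⟩

private lemma aux_ncard_biUnion_le (t : Finset V) (f : V → Set ℕ) :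
    (⋃ w ∈ t, f w).ncard ≤ ∑ w ∈ t, (f w).ncard := by
  classical
  induction t using Finset.induction_on with
  | empty => simp
  | insert _ _ hx ih =>
    rename_i a tt
    rw [Finset.sum_insert hx]
    calc (⋃ w ∈ insert a tt, f w).ncard = (f a ∪ ⋃ w ∈ tt, f w).ncard := by
          rw [Finset.set_biUnion_insert]
      _ ≤ (f a).ncard + (⋃ w ∈ tt, f w).ncard := Set.ncard_union_le _ _
      _ ≤ (f a).ncard + ∑ w ∈ tt, (f w).ncard := by omega

private lemma aux_edge_vertex {J : SimpleGraph V} {e : Sym2 V} {a : V}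
    (he : e ∈ J.edgeSet) (ha : a ∈ e) : ∃ x, J.Adj a x ∧ e = s(a, x) := by
  induction e with
  | _ b c =>
    rw [SimpleGraph.mem_edgeSet] at he
    rcases Sym2.mem_iff.mp ha with rfl | rfl
    · exact ⟨c, he, rfl⟩
    · exact ⟨b, he.symm, Sym2.eq_swap⟩

private lemma aux_key [DecidableEq (Sym2 V)] {u v : V} (huv : G.Adj u v)
    (φ : Sym2 V → ℕ) (α : ℕ)
    (hprop : IsProperEdgeColoring G (Function.update φ s(u,v) α))
    (q : G.Walk v u) (hadj : G.Adj u v) (hcyc : (Walk.cons hadj q).IsCycle)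
    (hcard : ((Walk.cons hadj q).edges.map (Function.update φ s(u,v) α)).toFinset.card < 3) :
    ∃ w : V, (G.Adj u w ∧ w ≠ v ∧
        φ s(u,w) ∈ {c : ℕ | ∃ e ∈ (G.deleteEdges {s(u,v)}).edgeSet, v ∈ e ∧ φ e = c}) ∧
      (∃ e ∈ (G.deleteEdges {s(u,v)}).edgeSet, w ∈ e ∧ φ e = α) ∧ α ≠ φ s(u,w) := by
  set φ' := Function.update φ s(u,v) α with hφ'
  have hupd : φ' s(u,v) = α := by simp [hφ']
  have hne : ∀ e : Sym2 V, e ≠ s(u,v) → φ' e = φ e := fun e he => Function.update_of_ne he _ _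
  have hq := (Walk.cons_isCycle_iff q hadj).mp hcyc
  have hsub : ∀ e ∈ (Walk.cons hadj q).edges, e ∈ G.edgeSet :=
    fun e he => (Walk.cons hadj q).edges_subset_edgeSet he
  have hqsub : ∀ e ∈ q.edges, e ∈ G.edgeSet := fun e he => hsub e (by simp [he])
  have hqne : ∀ e ∈ q.edges, e ≠ s(u,v) := by
    rintro e he rfl; exact hq.2 he
  have hqH : ∀ e ∈ q.edges, e ∈ (G.deleteEdges {s(u,v)}).edgeSet := by
    intro e he
    rw [edgeSet_deleteEdges]
    refine ⟨hqsub e he, ?_⟩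
    simp only [Set.mem_singleton_iff]
    exact hqne e he
  have hlen : 2 ≤ q.length := by
    have := hcyc.three_le_length
    simp only [Walk.length_cons] at this
    omega
  set S := ((Walk.cons hadj q).edges.map φ').toFinset with hS
  have hmemS : ∀ e ∈ (Walk.cons hadj q).edges, φ' e ∈ S := by
    intro e he
    rw [hS, List.mem_toFinset]
    exact List.mem_map_of_mem he
  have hαS : α ∈ S := hupd ▸ hmemS s(u,v) (by simp)
  obtain ⟨z, z', hz, hz', r0, hq0⟩ := aux_two_step q hlen
  have hf₁q : s(v,z) ∈ q.edges := by rw [hq0]; simp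
  have hf₁ne : s(v,z) ≠ s(u,v) := hqne _ hf₁q
  set β := φ' s(v,z) with hβ
  have hβα : β ≠ α := by
    intro hcon
    exact hprop s(v,z) (hqsub _ hf₁q) s(u,v) (G.mem_edgeSet.mpr huv) hf₁ne
      ⟨v, by simp, by simp⟩ (by rw [← hβ, hcon, hupd])
  have hβS : β ∈ S := hmemS s(v,z) (by simp [hf₁q])
  have hSeq : S = {α, β} := by
    have hsubS : ({α, β} : Finset ℕ) ⊆ S := by
      intro c hc
      rcases Finset.mem_insert.mp hc with rfl | hc
      · exact hαS
      · rwa [Finset.mem_singleton.mp hc]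
    have h2 : S.card ≤ ({α, β} : Finset ℕ).card := by
      rw [Finset.card_pair (Ne.symm hβα)]; omega
    exact (Finset.eq_of_subset_of_card_le hsubS h2).symm
  have hall : ∀ e ∈ (Walk.cons hadj q).edges, φ' e = α ∨ φ' e = β := by
    intro e he
    have := hmemS e he
    rw [hSeq] at this
    simpa using this
  obtain ⟨w, z₂, h₁, h₂, r, hqr⟩ := aux_two_step q.reverse (by rwa [Walk.length_reverse])
  have hg₁q : s(u,w) ∈ q.edges := by
    rw [← List.mem_reverse, ← Walk.edges_reverse, hqr]; simp
  have hg₂q : s(w,z₂) ∈ q.edges := by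
    rw [← List.mem_reverse, ← Walk.edges_reverse, hqr]; simp
  have hg₁ne : s(u,w) ≠ s(u,v) := hqne _ hg₁q
  have hg₂ne : s(w,z₂) ≠ s(u,v) := hqne _ hg₂q
  have hg₁g₂ : s(u,w) ≠ s(w,z₂) := by
    have hnd : q.reverse.edges.Nodup := (hq.1.reverse).edges_nodup
    rw [hqr] at hnd
    simp only [Walk.edges_cons, List.nodup_cons, List.mem_cons] at hnd
    exact fun h => hnd.1 (Or.inl h)
  have hwv : w ≠ v := by rintro rfl; exact hq.2 hg₁q
  have hg₁α : φ' s(u,w) ≠ α := by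
    intro hcon
    exact hprop s(u,w) (hqsub _ hg₁q) s(u,v) (G.mem_edgeSet.mpr huv) hg₁ne
      ⟨u, by simp, by simp⟩ (by rw [hcon, hupd])
  have hg₁β : φ' s(u,w) = β := (hall s(u,w) (by simp [hg₁q])).resolve_left hg₁α
  have hg₂β : φ' s(w,z₂) ≠ β := by
    intro hcon
    exact hprop s(w,z₂) (hqsub _ hg₂q) s(u,w) (hqsub _ hg₁q) (Ne.symm hg₁g₂)
      ⟨w, by simp, by simp⟩ (by rw [hcon, hg₁β])
  have hg₂α : φ' s(w,z₂) = α := (hall s(w,z₂) (by simp [hg₂q])).resolve_right hg₂β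
  refine ⟨w, ⟨h₁, hwv, ?_⟩, ⟨s(w,z₂), hqH _ hg₂q, by simp, ?_⟩, ?_⟩
  · exact ⟨s(v,z), hqH _ hf₁q, by simp, by rw [← hne s(v,z) hf₁ne, ← hβ, ← hg₁β, hne _ hg₁ne]⟩
  · rw [← hne _ hg₂ne, hg₂α]
  · rw [← hne _ hg₁ne, hg₁β]
    exact Ne.symm hβα

end AuxAEC

/-- **Fact 2 (third part).** Let `G` be `κ`-deletion-minimal, `uv ∈ E(G)`, and `φ` an
acyclic edge coloring of `G - uv` with colors from `{0, …, κ-1}`. If the set of colors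
at `u` and the set of colors at `v` share exactly `s` colors, and `W(uv)` is the set of
neighbors `x ≠ v` of `u` such that the color of `ux` appears at `v`, then
`deg_G(u) + deg_G(v) + Σ_{w ∈ W(uv)} deg_G(w) ≥ κ + 2s + 2`. -/
theorem deletionMinimal_common_colors_degree_sum {V : Type u₁} [Fintype V]
    (G : SimpleGraph V) (κ : ℕ) (h : DeletionMinimal G κ)
    (u v : V) (huv : G.Adj u v) (φ : Sym2 V → ℕ)
    (hφ : IsAcyclicEdgeColoring (G.deleteEdges {s(u, v)}) φ)
    (hcol : ∀ e ∈ (G.deleteEdges {s(u, v)}).edgeSet, φ e < κ)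
    (s : ℕ)
    (hs : ({c : ℕ | ∃ e ∈ (G.deleteEdges {s(u, v)}).edgeSet, u ∈ e ∧ φ e = c} ∩
        {c : ℕ | ∃ e ∈ (G.deleteEdges {s(u, v)}).edgeSet, v ∈ e ∧ φ e = c}).ncard = s) :
    κ + 2 * s + 2 ≤ vdeg G u + vdeg G v +
      ∑ᶠ x ∈ {x : V | G.Adj u x ∧ x ≠ v ∧
        φ s(u, x) ∈
          {c : ℕ | ∃ e ∈ (G.deleteEdges {s(u, v)}).edgeSet, v ∈ e ∧ φ e = c}},
        vdeg G x := by
  classical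
  obtain ⟨hmax, hgt, hmin⟩ := h
  set H := G.deleteEdges {s(u, v)} with hHdef
  set Uu := {c : ℕ | ∃ e ∈ H.edgeSet, u ∈ e ∧ φ e = c} with hUudef
  set Uv := {c : ℕ | ∃ e ∈ H.edgeSet, v ∈ e ∧ φ e = c} with hUvdef
  set Wset := {x : V | G.Adj u x ∧ x ≠ v ∧ φ s(u, x) ∈ Uv} with hWdef
  have hune : u ≠ v := huv.ne
  have hprop := hφ.1
  -- colors at a vertex as an image of the neighbor set
  have hcolors : ∀ a : V, {c : ℕ | ∃ e ∈ H.edgeSet, a ∈ e ∧ φ e = c} =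
      (fun x => φ s(a, x)) '' (H.neighborSet a) := by
    intro a
    ext c
    constructor
    · rintro ⟨e, heH, hae, rfl⟩
      obtain ⟨x, hx, rfl⟩ := aux_edge_vertex heH hae
      exact ⟨x, hx, rfl⟩
    · rintro ⟨x, hx, rfl⟩
      exact ⟨s(a, x), H.mem_edgeSet.mpr hx, by simp, rfl⟩
  have hinj : ∀ a : V, Set.InjOn (fun x => φ s(a, x)) (H.neighborSet a) := by
    intro a x hx y hy hxy
    by_contra hne
    refine hprop s(a, x) (H.mem_edgeSet.mpr hx) s(a, y) (H.mem_edgeSet.mpr hy) ?_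
      ⟨a, by simp, by simp⟩ hxy
    intro hcon
    rcases Sym2.eq_iff.mp hcon with ⟨-, h2⟩ | ⟨h1, -⟩
    · exact hne h2
    · exact H.irrefl (by rwa [← h1] at hy)
  have hcardcol : ∀ a : V, {c : ℕ | ∃ e ∈ H.edgeSet, a ∈ e ∧ φ e = c}.ncard =
      (H.neighborSet a).ncard := by
    intro a
    rw [hcolors a]
    exact Set.ncard_image_of_injOn (hinj a)
  -- neighbor sets of H
  have hHadj : ∀ a b : V, H.Adj a b ↔ G.Adj a b ∧ s(a, b) ≠ s(u, v) := by
    intro a b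
    rw [hHdef, deleteEdges_adj]
    simp
  have hNu : H.neighborSet u = G.neighborSet u \ {v} := by
    ext x
    simp only [mem_neighborSet, hHadj, Set.mem_diff, Set.mem_singleton_iff]
    constructor
    · rintro ⟨h1, h2⟩
      exact ⟨h1, fun hx => h2 (by rw [hx])⟩
    · rintro ⟨h1, h2⟩
      refine ⟨h1, fun hcon => ?_⟩
      rcases Sym2.eq_iff.mp hcon with ⟨-, h3⟩ | ⟨h3, -⟩
      · exact h2 h3
      · exact hune h3
  have hNv : H.neighborSet v = G.neighborSet v \ {u} := by
    ext x
    simp only [mem_neighborSet, hHadj, Set.mem_diff, Set.mem_singleton_iff]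
    constructor
    · rintro ⟨h1, h2⟩
      refine ⟨h1, fun hx => h2 ?_⟩
      rw [hx]
      exact Sym2.eq_swap
    · rintro ⟨h1, h2⟩
      refine ⟨h1, fun hcon => ?_⟩
      rcases Sym2.eq_iff.mp hcon with ⟨h3, -⟩ | ⟨-, h3⟩
      · exact hune h3.symm
      · exact h2 h3
  have hNw : ∀ w : V, w ≠ u → w ≠ v → H.neighborSet w = G.neighborSet w := by
    intro w hwu hwv
    ext x
    simp only [mem_neighborSet, hHadj]
    refine ⟨fun h1 => h1.1, fun h1 => ⟨h1, fun hcon => ?_⟩⟩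
    rcases Sym2.eq_iff.mp hcon with ⟨h3, -⟩ | ⟨h3, -⟩
    · exact hwu h3
    · exact hwv h3
  -- degree counts
  have hUuc : Uu.ncard + 1 = vdeg G u := by
    rw [hUudef, hcardcol u, hNu, vdeg]
    exact Set.ncard_diff_singleton_add_one huv (Set.toFinite _)
  have hUvc : Uv.ncard + 1 = vdeg G v := by
    rw [hUvdef, hcardcol v, hNv, vdeg]
    exact Set.ncard_diff_singleton_add_one huv.symm (Set.toFinite _)
  have hUufin : Uu.Finite := by
    rw [hUudef, hcolors u]
    exact (Set.toFinite _).image _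
  have hUvfin : Uv.Finite := by
    rw [hUvdef, hcolors v]
    exact (Set.toFinite _).image _
  -- W and its cardinality
  have hWsub : Wset ⊆ H.neighborSet u := by
    rintro w ⟨h1, h2, h3⟩
    rw [mem_neighborSet, hHadj]
    refine ⟨h1, fun hcon => ?_⟩
    rcases Sym2.eq_iff.mp hcon with ⟨-, h4⟩ | ⟨h4, -⟩
    · exact h2 h4
    · exact hune h4
  have himg : (fun x => φ s(u, x)) '' Wset = Uu ∩ Uv := by
    ext c
    constructor
    · rintro ⟨w, hw, rfl⟩
      refine ⟨?_, hw.2.2⟩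
      rw [hUudef, hcolors u]
      exact ⟨w, hWsub hw, rfl⟩
    · rintro ⟨hcu, hcv⟩
      rw [hUudef, hcolors u] at hcu
      obtain ⟨x, hx, rfl⟩ := hcu
      have hxadj : G.Adj u x := ((hHadj u x).mp hx).1
      have hxv : x ≠ v := by
        rintro rfl
        exact ((hHadj u x).mp hx).2 rfl
      exact ⟨x, ⟨hxadj, hxv, hcv⟩, rfl⟩
  have hWcard : Wset.ncard = s := by
    rw [← hs, ← himg, Set.ncard_image_of_injOn ((hinj u).mono hWsub)]
  -- MAIN EXTRACTION: every free color appears at some w ∈ Wset away from s(u,w)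
  have hA : ∀ α : ℕ, α < κ → α ∉ Uu → α ∉ Uv → ∃ w ∈ Wset,
      α ∈ {c : ℕ | ∃ e ∈ H.edgeSet, w ∈ e ∧ φ e = c} \ {φ s(u, w)} := by
    intro α hκα hαu hαv
    set φ' := Function.update φ s(u, v) α with hφ'def
    have hupd : φ' s(u, v) = α := by simp [hφ'def]
    have hne' : ∀ e : Sym2 V, e ≠ s(u, v) → φ' e = φ e :=
      fun e he => Function.update_of_ne he _ _
    have hGH : ∀ e ∈ G.edgeSet, e ≠ s(u, v) → e ∈ H.edgeSet := by
      intro e he hne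
      rw [hHdef, edgeSet_deleteEdges]
      exact ⟨he, by simpa using hne⟩
    have hprop' : IsProperEdgeColoring G φ' := by
      intro e₁ he₁ e₂ he₂ hne12 hshare
      by_cases h1 : e₁ = s(u, v) <;> by_cases h2 : e₂ = s(u, v)
      · exact absurd (h1.trans h2.symm) hne12
      · subst h1
        obtain ⟨x, hx1, hx2⟩ := hshare
        rw [hupd, hne' e₂ h2]
        intro hcon
        rcases Sym2.mem_iff.mp hx1 with rfl | rfl
        · exact hαu ⟨e₂, hGH e₂ he₂ h2, hx2, hcon.symm⟩
        · exact hαv ⟨e₂, hGH e₂ he₂ h2, hx2, hcon.symm⟩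
      · subst h2
        obtain ⟨x, hx1, hx2⟩ := hshare
        rw [hupd, hne' e₁ h1]
        intro hcon
        rcases Sym2.mem_iff.mp hx2 with rfl | rfl
        · exact hαu ⟨e₁, hGH e₁ he₁ h1, hx1, hcon⟩
        · exact hαv ⟨e₁, hGH e₁ he₁ h1, hx1, hcon⟩
      · rw [hne' e₁ h1, hne' e₂ h2]
        exact hprop e₁ (hGH e₁ he₁ h1) e₂ (hGH e₂ he₂ h2) hne12 hshare
    have hcol' : ∀ e ∈ G.edgeSet, φ' e < κ := by
      intro e he
      by_cases h1 : e = s(u, v)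
      · rw [h1, hupd]; exact hκα
      · rw [hne' e h1]; exact hcol e (hGH e he h1)
    have hnac : ¬ IsAcyclicEdgeColoring G φ' := by
      intro hac
      have hmem : κ ∈ {n : ℕ | ∃ ψ : Sym2 V → ℕ,
          IsAcyclicEdgeColoring G ψ ∧ ∀ e ∈ G.edgeSet, ψ e < n} := ⟨φ', hac, hcol'⟩
      have h1 := Nat.sInf_le hmem
      have hgt' : κ < sInf {n : ℕ | ∃ ψ : Sym2 V → ℕ,
          IsAcyclicEdgeColoring G ψ ∧ ∀ e ∈ G.edgeSet, ψ e < n} := hgt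
      exact absurd hgt' (not_lt.mpr h1)
    rw [IsAcyclicEdgeColoring] at hnac
    push_neg at hnac
    obtain ⟨x, c, hcyc, hcard3⟩ := hnac hprop'
    -- the bad cycle must pass through the edge s(u,v)
    by_cases hmem : s(u, v) ∈ c.edges
    · -- rotate the cycle to start at u
      have hu_sup : u ∈ c.support := c.fst_mem_support_of_mem_edges hmem
      have hc₁ : (c.rotate u hu_sup).IsCycle := hcyc.rotate hu_sup
      have hperm : (c.rotate u hu_sup).edges.Perm c.edges := (c.rotate_edges u hu_sup).perm
      have hmem₁ : s(u, v) ∈ (c.rotate u hu_sup).edges := hperm.mem_iff.mpr hmem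
      have hcard₁ : ((c.rotate u hu_sup).edges.map φ').toFinset.card < 3 := by
        have hfe : ((c.rotate u hu_sup).edges.map φ').toFinset = (c.edges.map φ').toFinset := by
          ext a
          simp only [List.mem_toFinset]
          exact (hperm.map φ').mem_iff
        rwa [hfe]
      obtain ⟨b, hadj, q, hceq⟩ := aux_cons_of_ne_nil (c.rotate u hu_sup) hc₁.ne_nil
      rw [hceq] at hc₁ hcard₁ hmem₁
      have hkey : ∃ w : V, (G.Adj u w ∧ w ≠ v ∧ φ s(u, w) ∈ Uv) ∧
          (∃ e ∈ H.edgeSet, w ∈ e ∧ φ e = α) ∧ α ≠ φ s(u, w) := by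
        by_cases hb : b = v
        · subst hb
          exact aux_key huv φ α hprop' q hadj hc₁ hcard₁
        · -- s(u,v) lies inside q; pass to the reverse cycle
          have hquv : s(u, v) ∈ q.edges := by
            rw [Walk.edges_cons, List.mem_cons] at hmem₁
            rcases hmem₁ with hcon | h2
            · exact absurd (Sym2.congr_right.mp hcon.symm).symm (fun h0 => hb h0.symm)
            · exact h2
          have hq := (Walk.cons_isCycle_iff q hadj).mp hc₁
          obtain ⟨d, h₁, r, hqr, hsd⟩ := aux_path_first_edge q.reverse hq.1.reverse
            s(u, v) (by rw [Walk.edges_reverse, List.mem_reverse]; exact hquv) (by simp)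
          have hd : d = v := Sym2.congr_right.mp hsd.symm
          subst hd
          have hc₂ : (Walk.cons hadj q).reverse =
              Walk.cons h₁ (r.append (Walk.cons hadj.symm Walk.nil)) := by
            rw [Walk.reverse_cons, hqr, Walk.cons_append]
          have hcyc₂ : (Walk.cons h₁ (r.append (Walk.cons hadj.symm Walk.nil))).IsCycle := by
            rw [← hc₂]
            exact aux_isCycle_reverse hc₁
          have hcard₂ : ((Walk.cons h₁
              (r.append (Walk.cons hadj.symm Walk.nil))).edges.map φ').toFinset.card < 3 := by
            rw [← hc₂, Walk.edges_reverse, List.map_reverse, List.toFinset_reverse]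
            exact hcard₁
          exact aux_key huv φ α hprop' _ h₁ hcyc₂ hcard₂
      obtain ⟨w, hw1, ⟨e, he1, he2, he3⟩, hw3⟩ := hkey
      exact ⟨w, hw1, ⟨e, he1, he2, he3⟩, by simpa using hw3⟩
    · -- otherwise the cycle lives in H, contradicting acyclicity of φ
      exfalso
      have hHsub : ∀ e ∈ c.edges, e ∈ H.edgeSet := by
        intro e he
        refine hGH e (c.edges_subset_edgeSet he) ?_
        rintro rfl
        exact hmem he
      have h3 := hφ.2 x (c.transfer H hHsub) (hcyc.transfer hHsub)
      rw [Walk.edges_transfer c hHsub] at h3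
      have hmapeq : c.edges.map φ = c.edges.map φ' := by
        apply List.map_congr_left
        intro e he
        exact (hne' e (by rintro rfl; exact hmem he)).symm
      rw [hmapeq] at h3
      omega
  -- COUNTING
  have hWfin : Wset.Finite := Set.toFinite _
  set Wf := hWfin.toFinset with hWfdef
  have hWfcard : Wf.card = s := by
    rw [hWfdef, ← Set.ncard_eq_toFinset_card Wset hWfin]
    exact hWcard
  set A := Set.Iio κ \ (Uu ∪ Uv) with hAdef
  have hAsub : A ⊆ ⋃ w ∈ Wf, ({c : ℕ | ∃ e ∈ H.edgeSet, w ∈ e ∧ φ e = c} \ {φ s(u, w)}) := by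
    rintro α ⟨hκα, hα⟩
    obtain ⟨w, hw, hmem⟩ := hA α hκα (fun hc => hα (Or.inl hc)) (fun hc => hα (Or.inr hc))
    exact Set.mem_biUnion ((Set.Finite.mem_toFinset hWfin).mpr hw) hmem
  have hAcard : A.ncard ≤ ∑ w ∈ Wf, ({c : ℕ | ∃ e ∈ H.edgeSet, w ∈ e ∧ φ e = c} \
      {φ s(u, w)}).ncard := by
    refine le_trans (Set.ncard_le_ncard hAsub ?_) (aux_ncard_biUnion_le _ _)
    refine Set.Finite.biUnion (Wf.finite_toSet) ?_
    intro w _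
    refine Set.Finite.diff ?_
    rw [hcolors w]
    exact (Set.toFinite _).image _
  have hperw : ∀ w ∈ Wf, ({c : ℕ | ∃ e ∈ H.edgeSet, w ∈ e ∧ φ e = c} \
      {φ s(u, w)}).ncard + 1 = vdeg G w := by
    intro w hw
    rw [hWfdef, Set.Finite.mem_toFinset] at hw
    obtain ⟨hadj, hwv, hwUv⟩ := hw
    have hwu : w ≠ u := fun hc => G.irrefl (hc ▸ hadj)
    have hmemw : φ s(u, w) ∈ {c : ℕ | ∃ e ∈ H.edgeSet, w ∈ e ∧ φ e = c} := by
      refine ⟨s(u, w), ?_, by simp, rfl⟩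
      rw [hHdef, edgeSet_deleteEdges]
      refine ⟨G.mem_edgeSet.mpr hadj, ?_⟩
      simp only [Set.mem_singleton_iff]
      intro hcon
      exact hwv (Sym2.congr_right.mp hcon)
    have hfin : {c : ℕ | ∃ e ∈ H.edgeSet, w ∈ e ∧ φ e = c}.Finite := by
      rw [hcolors w]
      exact (Set.toFinite _).image _
    rw [Set.ncard_diff_singleton_add_one hmemw hfin, hcardcol w, hNw w hwu hwv, vdeg]
  have hsum : ∑ w ∈ Wf, ({c : ℕ | ∃ e ∈ H.edgeSet, w ∈ e ∧ φ e = c} \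
      {φ s(u, w)}).ncard + s = ∑ w ∈ Wf, vdeg G w := by
    have h1 : ∑ w ∈ Wf, (({c : ℕ | ∃ e ∈ H.edgeSet, w ∈ e ∧ φ e = c} \
        {φ s(u, w)}).ncard + 1) = ∑ w ∈ Wf, vdeg G w := Finset.sum_congr rfl hperw
    rw [Finset.sum_add_distrib, Finset.sum_const, smul_eq_mul, mul_one, hWfcard] at h1
    exact h1
  have hIio : κ ≤ A.ncard + (Uu ∪ Uv).ncard := by
    have hsub : Set.Iio κ ⊆ A ∪ (Uu ∪ Uv) := by
      intro α hα
      by_cases hmem : α ∈ Uu ∪ Uv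
      · exact Or.inr hmem
      · exact Or.inl ⟨hα, hmem⟩
    have h1 : (Set.Iio κ).ncard ≤ (A ∪ (Uu ∪ Uv)).ncard := by
      refine Set.ncard_le_ncard hsub ?_
      refine Set.Finite.union (Set.Finite.diff (Set.finite_Iio κ)) (hUufin.union hUvfin)
    have h2 : (Set.Iio κ).ncard = κ := by
      rw [← Finset.coe_Iio, Set.ncard_coe_finset, Nat.card_Iio]
    calc κ = (Set.Iio κ).ncard := h2.symm
      _ ≤ (A ∪ (Uu ∪ Uv)).ncard := h1
      _ ≤ A.ncard + (Uu ∪ Uv).ncard := Set.ncard_union_le _ _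
  have hunion : (Uu ∪ Uv).ncard + s = Uu.ncard + Uv.ncard := by
    rw [← hs]
    exact Set.ncard_union_add_ncard_inter Uu Uv hUufin hUvfin
  have hfinsum : ∑ᶠ x ∈ Wset, vdeg G x = ∑ w ∈ Wf, vdeg G w := by
    rw [← Set.Finite.coe_toFinset hWfin, finsum_mem_coe_finset]
  rw [hfinsum]
  omega
end
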